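/- Let b₁, b₂ > 0, θ₁, θ₂ > 0 and 0 < t < θ₁b₁ + θ₂b₂, and let S = {(x₁, x₂) ∈ [0, b₁]×[0, b₂] : θ₁x₁ + θ₂x₂ = t} be a nondegenerate line segment (containing more than one point) with endpoints e and e′. Consider the model on S with regression functions f(x₁, x₂) = (1, x₁, x₂)ᵀ ∈ ℝ³. Every admissible design on S for this model is supported on the set {e, e′} of the two endpoints of the segment. -/

import Mathlib

open Matrix Set

noncomputable section

/-- A (finitely supported) approximate design on a design space `X`. -/
def IsDesign {α : Type*} (X : Set α) (ξ : α → ℝ) : Prop :=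
  (Function.support ξ).Finite ∧ (∀ x, 0 ≤ ξ x) ∧
    Function.support ξ ⊆ X ∧ ∑ᶠ x, ξ x = 1

/-- The information matrix of a design `ξ` for regression functions `f`. -/
def infoMatrix {α ι : Type*} [Fintype ι] (f : α → ι → ℝ) (ξ : α → ℝ) :
    Matrix ι ι ℝ :=
  ∑ᶠ x, ξ x • Matrix.vecMulVec (f x) (f x)

/-- An information function: positively homogeneous, superadditive, nonnegative,
non-constant and upper semicontinuous on the nonnegative definite matrices. -/
def IsInfoFun {ι : Type*} [Fintype ι] (φ : Matrix ι ι ℝ → ℝ) : Prop :=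
  (∀ M : Matrix ι ι ℝ, M.PosSemidef → 0 ≤ φ M) ∧
  (∀ c : ℝ, 0 < c → ∀ M : Matrix ι ι ℝ, M.PosSemidef → φ (c • M) = c * φ M) ∧
  (∀ M N : Matrix ι ι ℝ, M.PosSemidef → N.PosSemidef → φ M + φ N ≤ φ (M + N)) ∧
  (∃ M N : Matrix ι ι ℝ, M.PosSemidef ∧ N.PosSemidef ∧ φ M ≠ φ N) ∧
  UpperSemicontinuousOn φ {M : Matrix ι ι ℝ | M.PosSemidef}

/-- A `φ`-optimal design. -/
def IsOptimalDesign {α ι : Type*} [Fintype ι] (X : Set α) (f : α → ι → ℝ)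
    (φ : Matrix ι ι ℝ → ℝ) (ξ : α → ℝ) : Prop :=
  IsDesign X ξ ∧ ∀ η, IsDesign X η → φ (infoMatrix f η) ≤ φ (infoMatrix f ξ)

/-- Admissibility of a design in the Loewner ordering. -/
def IsAdmissible {α ι : Type*} [Fintype ι] (X : Set α) (f : α → ι → ℝ) (ξ : α → ℝ) : Prop :=
  IsDesign X ξ ∧
    ¬ ∃ η, IsDesign X η ∧ (infoMatrix f η - infoMatrix f ξ).PosSemidef ∧
      infoMatrix f η ≠ infoMatrix f ξ

/-- The smallest eigenvalue of a matrix. -/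
def lamMin {ι : Type*} [Fintype ι] (M : Matrix ι ι ℝ) : ℝ :=
  sInf {r : ℝ | ∃ v : ι → ℝ, v ≠ 0 ∧ M *ᵥ v = r • v}

lemma psd_smul_vmv (c : ℝ) (hc : 0 ≤ c) (w : Fin 3 → ℝ) :
    (c • Matrix.vecMulVec w w).PosSemidef := by
  rw [Matrix.posSemidef_iff_dotProduct_mulVec]
  constructor
  · ext i j
    simp [Matrix.conjTranspose_apply, Matrix.vecMulVec_apply, mul_comm]
  · intro x
    have h : (c • Matrix.vecMulVec w w) *ᵥ x = (c * (w ⬝ᵥ x)) • w := by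
      ext i
      simp [Matrix.mulVec, Matrix.vecMulVec_apply, dotProduct, Finset.mul_sum,
        Finset.sum_mul, mul_assoc, mul_comm, mul_left_comm]
    rw [h]
    have : star x ⬝ᵥ (c * (w ⬝ᵥ x)) • w = c * ((w ⬝ᵥ x) * (w ⬝ᵥ x)) := by
      simp [dotProduct_smul, dotProduct_comm x w, mul_assoc]
    rw [this]
    exact mul_nonneg hc (mul_self_nonneg _)

lemma key_identity (a b : ℝ) (hab : a + b = 1) (u v : Fin 3 → ℝ) :
    a • Matrix.vecMulVec u u + b • Matrix.vecMulVec v v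
      - Matrix.vecMulVec (a • u + b • v) (a • u + b • v)
      = (a * b) • Matrix.vecMulVec (u - v) (u - v) := by
  have hb : b = 1 - a := by linarith
  subst hb
  ext i j
  simp [Matrix.vecMulVec_apply]
  ring

lemma supp_fin_add {α : Type*} {M : Type*} [AddCommMonoid M] {f g : α → M}
    (hf : (Function.support f).Finite) (hg : (Function.support g).Finite) :
    (Function.support fun x => f x + g x).Finite := by
  refine (hf.union hg).subset fun x hx => ?_
  by_contra hc
  simp only [Set.mem_union, Function.mem_support, not_or, not_not] at hc
  exact hx (by simp [hc.1, hc.2])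

lemma finsum_add4 {α : Type*} {M : Type*} [AddCommMonoid M] {f g h k : α → M}
    (hf : (Function.support f).Finite) (hg : (Function.support g).Finite)
    (hh : (Function.support h).Finite) (hk : (Function.support k).Finite) :
    ∑ᶠ x, (f x + g x + h x + k x)
      = (∑ᶠ x, f x) + (∑ᶠ x, g x) + (∑ᶠ x, h x) + (∑ᶠ x, k x) := by
  have hfg := supp_fin_add hf hg
  have hfgh := supp_fin_add hfg hh
  rw [finsum_add_distrib hfgh hk, finsum_add_distrib hfg hh, finsum_add_distrib hf hg]

theorem segment_linear_model_admissible_support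
    (b₁ b₂ θ₁ θ₂ t : ℝ) (hb₁ : 0 < b₁) (hb₂ : 0 < b₂)
    (hθ₁ : 0 < θ₁) (hθ₂ : 0 < θ₂) (ht₀ : 0 < t) (ht₁ : t < θ₁ * b₁ + θ₂ * b₂)
    (S : Set (ℝ × ℝ))
    (hS : S = {x : ℝ × ℝ | x ∈ Set.Icc (0 : ℝ) b₁ ×ˢ Set.Icc (0 : ℝ) b₂ ∧
      θ₁ * x.1 + θ₂ * x.2 = t})
    (e e' : ℝ × ℝ) (he : e ∈ S) (he' : e' ∈ S) (hne : e ≠ e')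
    (hseg : S = segment ℝ e e')
    (f : ℝ × ℝ → Fin 3 → ℝ) (hf : ∀ x : ℝ × ℝ, f x = ![1, x.1, x.2])
    (ξ : ℝ × ℝ → ℝ) (hadm : IsAdmissible S f ξ) :
    Function.support ξ ⊆ {e, e'} := by
  classical
  obtain ⟨⟨hfin, hpos, hsub, hsum⟩, hnot⟩ := hadm
  intro z hz
  by_contra hzne
  simp only [Set.mem_insert_iff, Set.mem_singleton_iff, not_or] at hzne
  obtain ⟨hze, hze'⟩ := hzne
  have hzS : z ∈ S := hsub hz
  have hzpos : 0 < ξ z := lt_of_le_of_ne (hpos z) (Ne.symm hz)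
  rw [hseg] at hzS
  obtain ⟨a, b, ha, hb, hab, hz_eq⟩ := hzS
  have ha' : 0 < a := by
    rcases ha.lt_or_eq with h | h
    · exact h
    · exfalso
      apply hze'
      have hb1 : b = 1 := by linarith
      rw [← hz_eq, ← h, hb1]
      simp
  have hb' : 0 < b := by
    rcases hb.lt_or_eq with h | h
    · exact h
    · exfalso
      apply hze
      have ha1 : a = 1 := by linarith
      rw [← hz_eq, ← h, ha1]
      simp
  set w : ℝ := ξ z with hw
  set G : ℝ × ℝ → Matrix (Fin 3) (Fin 3) ℝ := fun x => Matrix.vecMulVec (f x) (f x) with hG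
  set c1 : ℝ × ℝ → ℝ := fun x => if x = e then w * a else 0 with hc1
  set c2 : ℝ × ℝ → ℝ := fun x => if x = e' then w * b else 0 with hc2
  set c3 : ℝ × ℝ → ℝ := fun x => if x = z then -w else 0 with hc3
  set η : ℝ × ℝ → ℝ := fun x => ξ x + c1 x + c2 x + c3 x with hη
  have hs1 : Function.support c1 ⊆ {e} := by
    intro x hx; by_contra h
    exact hx (if_neg (by simpa using h))
  have hs2 : Function.support c2 ⊆ {e'} := by
    intro x hx; by_contra h
    exact hx (if_neg (by simpa using h))
  have hs3 : Function.support c3 ⊆ {z} := by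
    intro x hx; by_contra h
    exact hx (if_neg (by simpa using h))
  have hf1 : (Function.support c1).Finite := (Set.finite_singleton e).subset hs1
  have hf2 : (Function.support c2).Finite := (Set.finite_singleton e').subset hs2
  have hf3 : (Function.support c3).Finite := (Set.finite_singleton z).subset hs3
  have hfinη : (Function.support η).Finite := by
    have := supp_fin_add (supp_fin_add (supp_fin_add hfin hf1) hf2) hf3
    exact this
  -- η is a design
  have hdesη : IsDesign S η := by
    refine ⟨hfinη, ?_, ?_, ?_⟩
    · intro x
      by_cases hxz : x = z
      · subst hxz
        have : η x = ξ x + c1 x + c2 x + c3 x := rfl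
        rw [this, hc1, hc2, hc3]
        simp only [if_pos rfl, if_neg hze, if_neg hze']
        simp [hw]
      · have h3 : c3 x = 0 := if_neg hxz
        have h1 : 0 ≤ c1 x := by
          rw [hc1]; dsimp only
          split
          · positivity
          · exact le_refl 0
        have h2 : 0 ≤ c2 x := by
          rw [hc2]; dsimp only
          split
          · positivity
          · exact le_refl 0
        have : η x = ξ x + c1 x + c2 x + c3 x := rfl
        rw [this, h3, add_zero]
        exact add_nonneg (add_nonneg (hpos x) h1) h2
    · intro x hx
      have hx' : x ∈ Function.support ξ ∪ ({e} ∪ ({e'} ∪ {z})) := by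
        by_contra h
        simp only [Set.mem_union, not_or] at h
        apply hx
        have k1 : c1 x = 0 := by
          by_contra hc; exact h.2.1 (hs1 hc)
        have k2 : c2 x = 0 := by
          by_contra hc; exact h.2.2.1 (hs2 hc)
        have k3 : c3 x = 0 := by
          by_contra hc; exact h.2.2.2 (hs3 hc)
        have hξx : ξ x = 0 := by
          by_contra hc; exact h.1 hc
        show ξ x + c1 x + c2 x + c3 x = 0
        rw [hξx, k1, k2, k3]; ring
      rcases hx' with h | h | h | h
      · exact hsub h
      · rw [Set.mem_singleton_iff.mp h]; exact he
      · rw [Set.mem_singleton_iff.mp h]; exact he'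
      · rw [Set.mem_singleton_iff.mp h]; exact hsub hz
    · have hsc1 : ∑ᶠ x, c1 x = w * a := by
        rw [finsum_eq_single c1 e (fun x hx => if_neg hx)]
        simp [hc1]
      have hsc2 : ∑ᶠ x, c2 x = w * b := by
        rw [finsum_eq_single c2 e' (fun x hx => if_neg hx)]
        simp [hc2]
      have hsc3 : ∑ᶠ x, c3 x = -w := by
        rw [finsum_eq_single c3 z (fun x hx => if_neg hx)]
        simp [hc3]
      calc ∑ᶠ x, η x = (∑ᶠ x, ξ x) + (∑ᶠ x, c1 x) + (∑ᶠ x, c2 x) + (∑ᶠ x, c3 x) :=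
            finsum_add4 hfin hf1 hf2 hf3
        _ = 1 + w * a + w * b + (-w) := by rw [hsum, hsc1, hsc2, hsc3]
        _ = 1 + w * (a + b) - w := by ring
        _ = 1 := by rw [hab]; ring
  -- info matrix of η
  have hGfin : ∀ (ψ : ℝ × ℝ → ℝ), (Function.support ψ).Finite →
      (Function.support fun x => ψ x • G x).Finite := by
    intro ψ hψ
    refine hψ.subset fun x hx => ?_
    by_contra h
    simp only [Function.mem_support, not_not] at h
    exact hx (by simp [h])
  have hMs1 : ∑ᶠ x, c1 x • G x = (w * a) • G e := by
    rw [finsum_eq_single _ e (fun x hx => by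
      show c1 x • G x = 0
      rw [show c1 x = 0 from if_neg hx, zero_smul])]
    show c1 e • G e = (w * a) • G e
    rw [show c1 e = w * a from if_pos rfl]
  have hMs2 : ∑ᶠ x, c2 x • G x = (w * b) • G e' := by
    rw [finsum_eq_single _ e' (fun x hx => by
      show c2 x • G x = 0
      rw [show c2 x = 0 from if_neg hx, zero_smul])]
    show c2 e' • G e' = (w * b) • G e'
    rw [show c2 e' = w * b from if_pos rfl]
  have hMs3 : ∑ᶠ x, c3 x • G x = (-w) • G z := by
    rw [finsum_eq_single _ z (fun x hx => by
      show c3 x • G x = 0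
      rw [show c3 x = 0 from if_neg hx, zero_smul])]
    show c3 z • G z = (-w) • G z
    rw [show c3 z = -w from if_pos rfl]
  have hMη : infoMatrix f η
      = infoMatrix f ξ + ((w * a) • G e + (w * b) • G e' + (-w) • G z) := by
    have step1 : infoMatrix f η
        = ∑ᶠ x, (ξ x • G x + c1 x • G x + c2 x • G x + c3 x • G x) := by
      show (∑ᶠ x, η x • G x) = _
      congr 1
      funext x
      show (ξ x + c1 x + c2 x + c3 x) • G x = _
      rw [add_smul, add_smul, add_smul]
    rw [step1, finsum_add4 (hGfin ξ hfin) (hGfin c1 hf1) (hGfin c2 hf2) (hGfin c3 hf3),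
      hMs1, hMs2, hMs3]
    show _ = (∑ᶠ x, ξ x • G x) + _
    abel
  -- the difference matrix
  set u : Fin 3 → ℝ := f e with hu
  set v : Fin 3 → ℝ := f e' with hv
  have hfz : f z = a • u + b • v := by
    have h1 : z.1 = a * e.1 + b * e'.1 := by
      rw [← hz_eq]; simp [Prod.smul_def]
    have h2 : z.2 = a * e.2 + b * e'.2 := by
      rw [← hz_eq]; simp [Prod.smul_def]
    funext i
    fin_cases i <;>
      simp [hf, hu, hv, h1, h2, hab]
  have hdiff : infoMatrix f η - infoMatrix f ξ
      = (w * (a * b)) • Matrix.vecMulVec (u - v) (u - v) := by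
    rw [hMη, add_sub_cancel_left]
    have : (w * a) • G e + (w * b) • G e' + (-w) • G z
        = w • (a • G e + b • G e' - G z) := by
      rw [smul_sub, smul_add, smul_smul, smul_smul, neg_smul, sub_eq_add_neg]
    rw [this]
    have hGz : a • G e + b • G e' - G z = (a * b) • Matrix.vecMulVec (u - v) (u - v) := by
      have : G z = Matrix.vecMulVec (a • u + b • v) (a • u + b • v) := by
        rw [hG]; dsimp only; rw [hfz]
      rw [this]
      exact key_identity a b hab u v
    rw [hGz, smul_smul]
  have huv : u ≠ v := by
    intro h
    apply hne
    have h1 := congrFun h 1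
    have h2 := congrFun h 2
    simp [hu, hv, hf] at h1 h2
    exact Prod.ext h1 h2
  obtain ⟨i, hi⟩ := Function.ne_iff.mp huv
  apply hnot
  refine ⟨η, hdesη, ?_, ?_⟩
  · rw [hdiff]
    exact psd_smul_vmv _ (by positivity) _
  · intro hMeq
    have h0 : (w * (a * b)) • Matrix.vecMulVec (u - v) (u - v) = 0 := by
      rw [← hdiff, hMeq, sub_self]
    have := congrFun (congrFun h0 i) i
    simp only [Matrix.smul_apply, Matrix.vecMulVec_apply, Matrix.zero_apply,
      smul_eq_mul, Pi.sub_apply] at this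
    have hpos' : 0 < w * (a * b) * ((u i - v i) * (u i - v i)) := by
      have : u i - v i ≠ 0 := sub_ne_zero.mpr hi
      positivity
    linarith [hpos'.ne' this]
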